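/- (Result 2, Case 1: correct data-source model, arbitrary covariate model.) For every integrable real-valued measurable function g of (Y, V) and every bounded measurable function k of V (playing the role of a possibly misspecified model for E[g(Y, V) | V]), E[(R/π(V)) · (g(Y, V) − k(V)) + ((1 − R)/(1 − π(V))) · (k(V) − E[g(Y, V) | V, L])] = 0, where π is the true propensity function. -/

import Mathlib

open MeasureTheory ProbabilityTheory

/-- **Result 2, Case 1.** With the true propensity `π` and an arbitrary bounded
measurable `k` of `V` (a possibly misspecified model for `E[g(Y,V) | V]`), the DR estimating
function has mean zero:
`E[(R/π(V)) (g(Y,V) − k(V)) + ((1 − R)/(1 − π(V))) (k(V) − E[g(Y,V) | V, L])] = 0`. -/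
theorem dr_estimating_function_unbiased_correct_propensity
    {Ω : Type*} {mΩ : MeasurableSpace Ω} [StandardBorelSpace Ω] [Nonempty Ω]
    {P : Measure Ω} [IsProbabilityMeasure P]
    {𝒱 𝓛 𝒴 : Type*} [m𝒱 : MeasurableSpace 𝒱] [m𝓛 : MeasurableSpace 𝓛]
    [m𝒴 : MeasurableSpace 𝒴]
    (V : Ω → 𝒱) (L : Ω → 𝓛) (Y : Ω → 𝒴)
    (hV : Measurable V) (hL : Measurable L) (hY : Measurable Y)
    (R : Ω → ℝ) (hR : Measurable R) (hR01 : ∀ ω, R ω = 0 ∨ R ω = 1)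
    (π : 𝒱 → ℝ) (hπ : Measurable π)
    -- `π(V)` is a version of `E[R | σ(V)]`
    (hπV : P[R | MeasurableSpace.comap V m𝒱] =ᵐ[P] fun ω => π (V ω))
    -- positivity
    (δ : ℝ) (hδ0 : 0 < δ) (hδhalf : δ < 1 / 2)
    (hpos : ∀ᵐ ω ∂P, δ ≤ π (V ω) ∧ π (V ω) ≤ 1 - δ)
    -- ignorability: `R ⟂ (Y, L) | σ(V)`
    (hign : CondIndepFun (MeasurableSpace.comap V m𝒱) (hV.comap_le) R
      (fun ω => (Y ω, L ω)) P)
    (g : 𝒴 × 𝒱 → ℝ) (hg : Measurable g)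
    (hgint : Integrable (fun ω => g (Y ω, V ω)) P)
    (k : 𝒱 → ℝ) (hk : Measurable k) (C : ℝ) (hkbdd : ∀ v, |k v| ≤ C) :
    ∫ ω, ((R ω / π (V ω)) * (g (Y ω, V ω) - k (V ω))
        + ((1 - R ω) / (1 - π (V ω)))
          * (k (V ω)
            - (P[fun ω' => g (Y ω', V ω')
                | MeasurableSpace.comap (fun ω' => (V ω', L ω')) inferInstance]) ω)) ∂P
      = 0 := by
  classical
  have hYL : Measurable fun ω => (Y ω, L ω) := hY.prodMk hL
  have hVL : Measurable fun ω => (V ω, L ω) := hV.prodMk hL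
  have hW : Measurable fun ω => ((Y ω, L ω), V ω) := hYL.prodMk hV
  have hm : MeasurableSpace.comap V m𝒱 ≤ mΩ := hV.comap_le
  have hm₂ : MeasurableSpace.comap (fun ω' => (V ω', L ω'))
      (inferInstance : MeasurableSpace (𝒱 × 𝓛)) ≤ mΩ := hVL.comap_le
  have hG : MeasurableSpace.comap (fun ω => ((Y ω, L ω), V ω))
      (inferInstance : MeasurableSpace ((𝒴 × 𝓛) × 𝒱)) ≤ mΩ := hW.comap_le
  have hWG : Measurable[MeasurableSpace.comap (fun ω => ((Y ω, L ω), V ω))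
      (inferInstance : MeasurableSpace ((𝒴 × 𝓛) × 𝒱))] fun ω => ((Y ω, L ω), V ω) :=
    measurable_iff_comap_le.mpr le_rfl
  have hVG : Measurable[MeasurableSpace.comap (fun ω => ((Y ω, L ω), V ω))
      (inferInstance : MeasurableSpace ((𝒴 × 𝓛) × 𝒱))] V := measurable_snd.comp hWG
  have hYVG : Measurable[MeasurableSpace.comap (fun ω => ((Y ω, L ω), V ω))
      (inferInstance : MeasurableSpace ((𝒴 × 𝓛) × 𝒱))] fun ω => (Y ω, V ω) :=
    ((measurable_fst.comp measurable_fst).prodMk measurable_snd).comp hWG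
  have hVLG : Measurable[MeasurableSpace.comap (fun ω => ((Y ω, L ω), V ω))
      (inferInstance : MeasurableSpace ((𝒴 × 𝓛) × 𝒱))] fun ω' => (V ω', L ω') :=
    (measurable_snd.prodMk (measurable_snd.comp measurable_fst)).comp hWG
  -- boundedness facts
  have hRbd : ∀ ω, ‖R ω‖ ≤ 1 := fun ω => by rcases hR01 ω with h | h <;> simp [h]
  have hRint : Integrable R P :=
    (memLp_top_of_bound hR.aestronglyMeasurable 1 (ae_of_all _ hRbd)).integrable le_top
  have hπVmeas : Measurable fun ω => π (V ω) := hπ.comp hV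
  have hπVbd : ∀ᵐ ω ∂P, ‖π (V ω)‖ ≤ 1 := by
    filter_upwards [hpos] with ω h
    rw [Real.norm_eq_abs, abs_le]
    constructor <;> nlinarith [h.1, h.2, hδ0.le, hδhalf.le]
  have hπVint : Integrable (fun ω => π (V ω)) P :=
    (memLp_top_of_bound hπVmeas.aestronglyMeasurable 1 hπVbd).integrable le_top
  have hπVsm : StronglyMeasurable[MeasurableSpace.comap V m𝒱] fun ω => π (V ω) :=
    (hπ.comp (measurable_iff_comap_le.mpr le_rfl)).stronglyMeasurable
  have htot : ∫ ω, π (V ω) ∂P = ∫ ω, R ω ∂P := by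
    rw [← integral_condExp hm (f := R)]
    exact integral_congr_ae hπV.symm
  have hRind : R = Set.indicator (R ⁻¹' {1}) fun _ => (1 : ℝ) := by
    funext ω
    rcases hR01 ω with h | h <;> simp [Set.indicator_apply, Set.mem_preimage, h]
  have hprod := (condIndepFun_iff (MeasurableSpace.comap V m𝒱) hV.comap_le R
    (fun ω => (Y ω, L ω)) hR hYL P).mp hign
  have ht1cond : P⟦R ⁻¹' {1} | MeasurableSpace.comap V m𝒱⟧ =ᵐ[P] fun ω => π (V ω) := by
    rw [← hRind]; exact hπV
  -- Claim A : `π ∘ V` is a version of `E[R | σ((Y,L),V)]`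
  have hRG : (fun ω => π (V ω)) =ᵐ[P] P[R | MeasurableSpace.comap
      (fun ω => ((Y ω, L ω), V ω)) (inferInstance : MeasurableSpace ((𝒴 × 𝓛) × 𝒱))] := by
    refine ae_eq_condExp_of_forall_setIntegral_eq hG hRint
      (fun s _ _ => hπVint.integrableOn) ?_
      ⟨fun ω => π (V ω), (hπ.comp hVG).stronglyMeasurable, Filter.EventuallyEq.rfl⟩
    rintro s ⟨t, ht, rfl⟩ -
    refine MeasurableSpace.induction_on_inter
      (C := fun t _ => ∫ x in (fun ω => ((Y ω, L ω), V ω)) ⁻¹' t, π (V x) ∂P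
        = ∫ x in (fun ω => ((Y ω, L ω), V ω)) ⁻¹' t, R x ∂P)
      generateFrom_prod.symm isPiSystem_prod ?_ ?_ ?_ ?_ t ht
    · simp
    · rintro u ⟨A, hA, B, hB, rfl⟩
      have hA' : MeasurableSet ((fun ω => (Y ω, L ω)) ⁻¹' A) := hYL hA
      have hB'meas : MeasurableSet[MeasurableSpace.comap V m𝒱] (V ⁻¹' B) := ⟨B, hB, rfl⟩
      have ht1 : MeasurableSet (R ⁻¹' {1}) := hR (measurableSet_singleton 1)
      have hI1int : Integrable
          (Set.indicator ((R ⁻¹' {1}) ∩ ((fun ω => (Y ω, L ω)) ⁻¹' A)) fun _ => (1 : ℝ)) P :=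
        (integrable_const 1).indicator (ht1.inter hA')
      have hIAint : Integrable
          (Set.indicator ((fun ω => (Y ω, L ω)) ⁻¹' A) fun _ => (1 : ℝ)) P :=
        (integrable_const 1).indicator hA'
      have hmul := hprod (R ⁻¹' {1}) ((fun ω => (Y ω, L ω)) ⁻¹' A)
        ⟨{1}, measurableSet_singleton 1, rfl⟩ ⟨A, hA, rfl⟩
      have hpull := condExp_stronglyMeasurable_mul_of_bound hm hπVsm hIAint 1 hπVbd
      have hπIAint : Integrable ((fun ω => π (V ω)) *
          Set.indicator ((fun ω => (Y ω, L ω)) ⁻¹' A) fun _ => (1 : ℝ)) P :=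
        hIAint.bdd_mul hπVmeas.aestronglyMeasurable hπVbd
      rw [Set.mk_preimage_prod]
      calc ∫ x in ((fun ω => (Y ω, L ω)) ⁻¹' A) ∩ (V ⁻¹' B), π (V x) ∂P
          = ∫ x in V ⁻¹' B,
            Set.indicator ((fun ω => (Y ω, L ω)) ⁻¹' A) (fun ω => π (V ω)) x ∂P := by
            rw [setIntegral_indicator hA', Set.inter_comm]
        _ = ∫ x in V ⁻¹' B, ((fun ω => π (V ω)) *
            Set.indicator ((fun ω => (Y ω, L ω)) ⁻¹' A) fun _ => (1 : ℝ)) x ∂P := by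
            refine integral_congr_ae (ae_restrict_of_ae (ae_of_all _ fun ω => ?_))
            by_cases hω : ω ∈ (fun ω => (Y ω, L ω)) ⁻¹' A <;>
              simp [Set.indicator_apply, hω]
        _ = ∫ x in V ⁻¹' B, (P[(fun ω => π (V ω)) *
            Set.indicator ((fun ω => (Y ω, L ω)) ⁻¹' A) fun _ => (1 : ℝ)
              | MeasurableSpace.comap V m𝒱]) x ∂P :=
            (setIntegral_condExp hm hπIAint hB'meas).symm
        _ = ∫ x in V ⁻¹' B, (P[Set.indicator
            ((R ⁻¹' {1}) ∩ ((fun ω => (Y ω, L ω)) ⁻¹' A)) fun _ => (1 : ℝ)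
              | MeasurableSpace.comap V m𝒱]) x ∂P := by
            refine integral_congr_ae (ae_restrict_of_ae ?_)
            filter_upwards [hpull, hmul, ht1cond] with ω h0 h1 h2
            rw [h0, Pi.mul_apply, h1, Pi.mul_apply, h2]
        _ = ∫ x in V ⁻¹' B, Set.indicator
            ((R ⁻¹' {1}) ∩ ((fun ω => (Y ω, L ω)) ⁻¹' A)) (fun _ => (1 : ℝ)) x ∂P :=
            setIntegral_condExp hm hI1int hB'meas
        _ = ∫ x in V ⁻¹' B,
            Set.indicator ((fun ω => (Y ω, L ω)) ⁻¹' A) R x ∂P := by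
            refine integral_congr_ae (ae_restrict_of_ae (ae_of_all _ fun ω => ?_))
            by_cases hω : ω ∈ (fun ω => (Y ω, L ω)) ⁻¹' A <;>
              rcases hR01 ω with h | h <;>
              simp [Set.indicator_apply, Set.mem_inter_iff, Set.mem_preimage, hω, h]
        _ = ∫ x in ((fun ω => (Y ω, L ω)) ⁻¹' A) ∩ (V ⁻¹' B), R x ∂P := by
            rw [setIntegral_indicator hA', Set.inter_comm]
    · intro u hu hC
      have hmeas : MeasurableSet ((fun ω => ((Y ω, L ω), V ω)) ⁻¹' u) := hW hu
      rw [Set.preimage_compl]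
      have e1 := integral_add_compl hmeas hπVint
      have e2 := integral_add_compl hmeas hRint
      linarith
    · intro f hdisj hfmeas hC
      simp only [Set.preimage_iUnion]
      rw [integral_iUnion (fun i => hW (hfmeas i))
          (fun i j hij => (hdisj hij).preimage _) hπVint.integrableOn,
        integral_iUnion (fun i => hW (hfmeas i))
          (fun i j hij => (hdisj hij).preimage _) hRint.integrableOn]
      exact tsum_congr hC
  -- the key identity : `E[R ψ] = E[π(V) ψ]` for `ψ` measurable w.r.t. `σ((Y,L),V)`
  have key : ∀ ψ : Ω → ℝ, StronglyMeasurable[MeasurableSpace.comap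
      (fun ω => ((Y ω, L ω), V ω)) (inferInstance : MeasurableSpace ((𝒴 × 𝓛) × 𝒱))] ψ →
      Integrable ψ P → ∫ ω, R ω * ψ ω ∂P = ∫ ω, π (V ω) * ψ ω ∂P := by
    intro ψ hψm hψi
    have hψR : Integrable (ψ * R) P := by
      have h1 : ψ * R = fun ω => R ω * ψ ω := by funext ω; exact mul_comm _ _
      rw [h1]
      exact hψi.bdd_mul hR.aestronglyMeasurable (ae_of_all _ hRbd)
    have hcomm : (fun ω => R ω * ψ ω) = ψ * R := by funext ω; exact mul_comm _ _
    rw [hcomm]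
    calc ∫ ω, (ψ * R) ω ∂P
        = ∫ ω, (P[ψ * R | MeasurableSpace.comap (fun ω => ((Y ω, L ω), V ω))
            (inferInstance : MeasurableSpace ((𝒴 × 𝓛) × 𝒱))]) ω ∂P :=
          (integral_condExp hG).symm
      _ = ∫ ω, (ψ * P[R | MeasurableSpace.comap (fun ω => ((Y ω, L ω), V ω))
            (inferInstance : MeasurableSpace ((𝒴 × 𝓛) × 𝒱))]) ω ∂P :=
          integral_congr_ae (condExp_mul_of_stronglyMeasurable_left hψm hψR hRint)
      _ = ∫ ω, π (V ω) * ψ ω ∂P := by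
          refine integral_congr_ae ?_
          filter_upwards [hRG] with ω hω
          rw [Pi.mul_apply, ← hω, mul_comm]
  -- name the inner conditional expectation
  set Q := P[fun ω' => g (Y ω', V ω')
      | MeasurableSpace.comap (fun ω' => (V ω', L ω')) inferInstance] with hQdef
  have hQi : Integrable Q P := by rw [hQdef]; exact integrable_condExp
  have hQsm : StronglyMeasurable[MeasurableSpace.comap
      (fun ω => ((Y ω, L ω), V ω)) (inferInstance : MeasurableSpace ((𝒴 × 𝓛) × 𝒱))] Q := by
    rw [hQdef]; exact stronglyMeasurable_condExp.mono hVLG.comap_le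
  have hQint_eq : ∫ ω, Q ω ∂P = ∫ ω, g (Y ω, V ω) ∂P := by
    rw [hQdef]; exact integral_condExp hm₂
  -- the two auxiliary functions
  set ψ₁ : Ω → ℝ := fun ω => (π (V ω))⁻¹ * (g (Y ω, V ω) - k (V ω)) with hψ₁def
  set ψ₂ : Ω → ℝ := fun ω => (1 - π (V ω))⁻¹ * (k (V ω) - Q ω) with hψ₂def
  have hψ₁sm : StronglyMeasurable[MeasurableSpace.comap
      (fun ω => ((Y ω, L ω), V ω)) (inferInstance : MeasurableSpace ((𝒴 × 𝓛) × 𝒱))] ψ₁ := by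
    rw [hψ₁def]
    exact ((hπ.comp hVG).inv.mul ((hg.comp hYVG).sub (hk.comp hVG))).stronglyMeasurable
  have hψ₂sm : StronglyMeasurable[MeasurableSpace.comap
      (fun ω => ((Y ω, L ω), V ω)) (inferInstance : MeasurableSpace ((𝒴 × 𝓛) × 𝒱))] ψ₂ := by
    rw [hψ₂def]
    exact (measurable_const.sub (hπ.comp hVG)).inv.stronglyMeasurable.mul
      ((hk.comp hVG).stronglyMeasurable.sub hQsm)
  have hkVint : Integrable (fun ω => k (V ω)) P :=
    (memLp_top_of_bound (hk.comp hV).aestronglyMeasurable C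
      (ae_of_all _ fun ω => by simpa [Real.norm_eq_abs] using hkbdd (V ω))).integrable le_top
  have hinv1bd : ∀ᵐ ω ∂P, ‖(π (V ω))⁻¹‖ ≤ δ⁻¹ := by
    filter_upwards [hpos] with ω h
    have h1 : 0 < π (V ω) := lt_of_lt_of_le hδ0 h.1
    rw [Real.norm_eq_abs, abs_of_pos (inv_pos.mpr h1)]
    exact inv_anti₀ hδ0 h.1
  have hinv2bd : ∀ᵐ ω ∂P, ‖(1 - π (V ω))⁻¹‖ ≤ δ⁻¹ := by
    filter_upwards [hpos] with ω h
    have h1 : 0 < 1 - π (V ω) := by linarith [h.2]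
    rw [Real.norm_eq_abs, abs_of_pos (inv_pos.mpr h1)]
    exact inv_anti₀ hδ0 (by linarith [h.2])
  have hψ₁i : Integrable ψ₁ P := by
    rw [hψ₁def]
    exact (hgint.sub hkVint).bdd_mul hπVmeas.inv.aestronglyMeasurable hinv1bd
  have hψ₂i : Integrable ψ₂ P := by
    rw [hψ₂def]
    exact (hkVint.sub hQi).bdd_mul
      (measurable_const.sub hπVmeas).inv.aestronglyMeasurable hinv2bd
  have hRψ₁ : Integrable (fun ω => R ω * ψ₁ ω) P :=
    hψ₁i.bdd_mul hR.aestronglyMeasurable (ae_of_all _ hRbd)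
  have hRψ₂ : Integrable (fun ω => R ω * ψ₂ ω) P :=
    hψ₂i.bdd_mul hR.aestronglyMeasurable (ae_of_all _ hRbd)
  have hπψ₁ : Integrable (fun ω => π (V ω) * ψ₁ ω) P :=
    hψ₁i.bdd_mul hπVmeas.aestronglyMeasurable hπVbd
  have hπψ₂ : Integrable (fun ω => π (V ω) * ψ₂ ω) P :=
    hψ₂i.bdd_mul hπVmeas.aestronglyMeasurable hπVbd
  have hptw : (fun ω => (R ω / π (V ω)) * (g (Y ω, V ω) - k (V ω))
      + ((1 - R ω) / (1 - π (V ω))) * (k (V ω) - Q ω))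
      = fun ω => R ω * ψ₁ ω + (ψ₂ ω - R ω * ψ₂ ω) := by
    funext ω
    simp only [hψ₁def, hψ₂def, div_eq_mul_inv]
    ring
  have hsubR : Integrable (fun ω => ψ₂ ω - R ω * ψ₂ ω) P := hψ₂i.sub hRψ₂
  have hsubπ : Integrable (fun ω => ψ₂ ω - π (V ω) * ψ₂ ω) P := hψ₂i.sub hπψ₂
  rw [hptw, integral_add hRψ₁ hsubR, integral_sub hψ₂i hRψ₂,
    key _ hψ₁sm hψ₁i, key _ hψ₂sm hψ₂i,
    ← integral_sub hψ₂i hπψ₂, ← integral_add hπψ₁ hsubπ]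
  have hae : (fun ω => π (V ω) * ψ₁ ω + (ψ₂ ω - π (V ω) * ψ₂ ω))
      =ᵐ[P] fun ω => g (Y ω, V ω) - Q ω := by
    filter_upwards [hpos] with ω h
    have h1 : π (V ω) ≠ 0 := ne_of_gt (lt_of_lt_of_le hδ0 h.1)
    have h2 : 1 - π (V ω) ≠ 0 := ne_of_gt (by linarith [h.2])
    simp only [hψ₁def, hψ₂def]
    field_simp
    ring
  rw [integral_congr_ae hae, integral_sub hgint hQi, hQint_eq, sub_self]
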